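/- arXiv:1204.4310 — 2 statements merged into one kernel-verified Lean document; each statement's English description precedes it below -/
import Mathlib

section
/- The homomorphism F_g → F_g sending each free generator a_i to its square a_i² is injective; moreover, any automorphism of F_g that preserves the subgroup generated by the squares a_1²,…,a_g² and acts faithfully on that subgroup acts faithfully on F_g. -/
namespace SquareMapAux

variable {α : Type*} [DecidableEq α]

/-- The "no cancellation" relation between adjacent letters. -/
def R (a b : α × Bool) : Prop := ¬(a.1 = b.1 ∧ a.2 = !b.2)

/-- doubling each letter of a word -/
def dup (L : List (α × Bool)) : List (α × Bool) := L.flatMap fun x => [x, x]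

@[simp] lemma dup_nil : dup ([] : List (α × Bool)) = [] := rfl

@[simp] lemma dup_cons (x : α × Bool) (L : List (α × Bool)) :
    dup (x :: L) = x :: x :: dup L := rfl

lemma dup_injective : Function.Injective (dup (α := α)) := by
  intro L₁
  induction L₁ with
  | nil => intro L₂ h; cases L₂ with
    | nil => rfl
    | cons y t => simp [dup] at h
  | cons x t ih =>
    intro L₂ h
    cases L₂ with
    | nil => simp [dup] at h
    | cons y t2 =>
      simp only [dup_cons, List.cons.injEq] at h
      obtain ⟨h1, _, h3⟩ := h
      rw [h1, ih h3]

lemma reduce_length_le (L : List (α × Bool)) :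
    (FreeGroup.reduce L).length ≤ L.length :=
  FreeGroup.Red.length_le FreeGroup.reduce.red

lemma chain'_of_reduce_eq : ∀ (L : List (α × Bool)), FreeGroup.reduce L = L → List.Chain' R L := by
  intro L
  induction L with
  | nil => intro _; exact List.isChain_nil
  | cons x t ih =>
    intro h
    rw [FreeGroup.reduce.cons] at h
    rcases ht : FreeGroup.reduce t with _ | ⟨c, ts⟩
    · rw [ht] at h
      simp only at h
      cases t with
      | nil => exact List.isChain_singleton _
      | cons y t' =>
        exfalso
        have := congrArg List.length h
        simp at this
    · rw [ht] at h
      simp only at h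
      by_cases hc : x.1 = c.1 ∧ x.2 = !c.2
      · rw [if_pos hc] at h
        exfalso
        have hlen := congrArg List.length h
        have : ts.length + 1 = (FreeGroup.reduce t).length := by rw [ht]; simp
        have h2 : (FreeGroup.reduce t).length ≤ t.length := reduce_length_le t
        simp only [List.length_cons] at hlen
        omega
      · rw [if_neg hc] at h
        have htl : c :: ts = t := by
          cases h; rfl
        have hrt : FreeGroup.reduce t = t := by rw [ht, htl]
        have hch := ih hrt
        rw [← htl] at hch ⊢
        exact List.IsChain.cons_cons hc hch

lemma reduce_eq_of_chain' : ∀ (L : List (α × Bool)), List.Chain' R L → FreeGroup.reduce L = L := by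
  intro L
  induction L with
  | nil => intro _; rfl
  | cons x t ih =>
    intro h
    rw [FreeGroup.reduce.cons]
    cases t with
    | nil => rfl
    | cons y t' =>
      have hch : List.Chain' R (y :: t') := h.tail
      have hxy : R x y := List.isChain_cons_cons.mp h |>.1
      rw [ih hch]
      simp only
      rw [if_neg hxy]

lemma chain'_dup {L : List (α × Bool)} (h : List.Chain' R L) : List.Chain' R (dup L) := by
  induction L with
  | nil => exact List.isChain_nil
  | cons x t ih =>
    have hxx : R x x := by
      intro ⟨_, h2⟩
      exact (Bool.not_ne_self x.2).symm (h2 ▸ rfl) |>.elim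
    cases t with
    | nil => exact List.isChain_pair.mpr hxx
    | cons y t' =>
      have hxy : R x y := (List.isChain_cons_cons.mp h).1
      have := ih h.tail
      rw [dup_cons]
      rw [dup_cons] at this ⊢
      exact List.isChain_cons_cons.mpr ⟨hxx, List.isChain_cons_cons.mpr ⟨hxy, this⟩⟩

lemma lift_sq_mk (L : List (α × Bool)) :
    (FreeGroup.lift (fun i : α => FreeGroup.of i * FreeGroup.of i)) (FreeGroup.mk L)
      = FreeGroup.mk (dup L) := by
  induction L with
  | nil => rw [← FreeGroup.one_eq_mk, map_one, dup_nil, FreeGroup.one_eq_mk]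
  | cons x t ih =>
    have : FreeGroup.mk (x :: t) = FreeGroup.mk [x] * FreeGroup.mk t := by
      rw [FreeGroup.mul_mk]; rfl
    rw [this, map_mul, ih, dup_cons]
    have hsingle : (FreeGroup.lift (fun i : α => FreeGroup.of i * FreeGroup.of i))
        (FreeGroup.mk [x]) = FreeGroup.mk [x, x] := by
      rcases x with ⟨i, b⟩
      cases b
      · have : FreeGroup.mk [((i : α), false)] = (FreeGroup.of i)⁻¹ := by
          rw [FreeGroup.of, FreeGroup.inv_mk]; rfl
        rw [this, map_inv, FreeGroup.lift_apply_of]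
        rw [mul_inv_rev, FreeGroup.of, FreeGroup.inv_mk, FreeGroup.mul_mk]
        rfl
      · have : FreeGroup.mk [((i : α), true)] = FreeGroup.of i := rfl
        rw [this, FreeGroup.lift_apply_of, FreeGroup.of, FreeGroup.mul_mk]; rfl
    rw [hsingle, FreeGroup.mul_mk]
    rfl

lemma lift_sq_injective :
    Function.Injective
      (FreeGroup.lift (fun i : α => FreeGroup.of i * FreeGroup.of i) :
        FreeGroup α →* FreeGroup α) := by
  intro x y hxy
  have hx := lift_sq_mk x.toWord
  have hy := lift_sq_mk y.toWord
  rw [FreeGroup.mk_toWord] at hx hy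
  rw [hx, hy] at hxy
  have hredx : FreeGroup.reduce (dup x.toWord) = dup x.toWord :=
    reduce_eq_of_chain' _ (chain'_dup (chain'_of_reduce_eq _ (FreeGroup.reduce_toWord x)))
  have hredy : FreeGroup.reduce (dup y.toWord) = dup y.toWord :=
    reduce_eq_of_chain' _ (chain'_dup (chain'_of_reduce_eq _ (FreeGroup.reduce_toWord y)))
  have : dup x.toWord = dup y.toWord := by
    have := congrArg FreeGroup.toWord hxy
    rwa [FreeGroup.toWord_mk, FreeGroup.toWord_mk, hredx, hredy] at this
  have := dup_injective this
  calc x = FreeGroup.mk x.toWord := (FreeGroup.mk_toWord).symm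
    _ = FreeGroup.mk y.toWord := by rw [this]
    _ = y := FreeGroup.mk_toWord

end SquareMapAux

/-- (1) The endomorphism of the free group `F_g` sending each free generator
`a_i` to its square `a_i²` is injective; moreover (2) any group acting by
automorphisms of `F_g`, preserving the subgroup generated by the squares
`a_1², …, a_g²` and acting faithfully on that subgroup, acts faithfully
on `F_g`. -/
theorem square_map_injective_and_faithful (g : ℕ) :
    Function.Injective
      (FreeGroup.lift (fun i : Fin g => FreeGroup.of i * FreeGroup.of i) :
        FreeGroup (Fin g) →* FreeGroup (Fin g)) ∧
    ∀ (H : Type) [Group H] (α : H →* MulAut (FreeGroup (Fin g))),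
      (∀ (h : H) (x : FreeGroup (Fin g)),
        x ∈ Subgroup.closure (Set.range fun i : Fin g => FreeGroup.of i * FreeGroup.of i) →
        α h x ∈ Subgroup.closure
          (Set.range fun i : Fin g => FreeGroup.of i * FreeGroup.of i)) →
      (∀ h : H,
        (∀ x ∈ Subgroup.closure
            (Set.range fun i : Fin g => FreeGroup.of i * FreeGroup.of i),
          α h x = x) → h = 1) →
      Function.Injective α := by
  constructor
  · exact SquareMapAux.lift_sq_injective
  · intro H _ α _ hfaith
    rw [← MonoidHom.ker_eq_bot_iff, eq_bot_iff]
    intro h hh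
    have hker : α h = 1 := hh
    have : h = 1 := hfaith h (fun x _ => by rw [hker]; rfl)
    simpa [this] using Subgroup.one_mem _
end

section
/- In the free group F_{2g} = ⟨a_1, b_1, …, a_g, b_g⟩, the elements c_i = a_i b_i a_i^{-1} b_i^{-1} for i = 1,…,g generate a free subgroup of rank g, i.e., the homomorphism F_g → F_{2g} sending the i-th generator to [a_i, b_i] is injective. -/
open scoped commutatorElement

namespace CommFreeAux

open FreeGroup

variable {α : Type*} [DecidableEq α]

/-- The "no cancellation" relation between consecutive letters of a word. -/
def Rr (a b : α × Bool) : Prop := ¬(a.1 = b.1 ∧ a.2 = !b.2)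

theorem reduce_eq_self_of_chain' :
    ∀ {L : List (α × Bool)}, List.Chain' Rr L → FreeGroup.reduce L = L
  | [], _ => rfl
  | x :: L, h => by
    have hL : FreeGroup.reduce L = L := reduce_eq_self_of_chain' h.tail
    rw [FreeGroup.reduce.cons, hL]
    cases L with
    | nil => rfl
    | cons y tl =>
      have hxy : ¬(x.1 = y.1 ∧ x.2 = !y.2) := (List.isChain_cons_cons.mp h).1
      simp [if_neg hxy]

theorem chain'_of_reduce_eq_self :
    ∀ {L : List (α × Bool)}, FreeGroup.reduce L = L → List.Chain' Rr L
  | [], _ => List.isChain_nil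
  | x :: L, h => by
    rw [FreeGroup.reduce.cons] at h
    cases r : FreeGroup.reduce L with
    | nil =>
      rw [r] at h
      dsimp only at h
      have : L = [] := by
        cases L with
        | nil => rfl
        | cons y tl => simp at h
      subst this; exact List.isChain_singleton x
    | cons y tl =>
      rw [r] at h
      dsimp only at h
      by_cases hc : x.1 = y.1 ∧ x.2 = !y.2
      · exfalso
        rw [if_pos hc] at h
        have h1 : tl.length + 2 ≤ L.length + 1 := by
          have := FreeGroup.Red.length_le (FreeGroup.reduce.red (L := L))
          rw [r] at this
          simpa using Nat.succ_le_succ this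
        have h2 : tl.length = L.length + 1 := by
          simpa using congrArg List.length h
        omega
      · rw [if_neg hc] at h
        have hL : L = y :: tl := by
          injection h with _ h2
          exact h2.symm
        subst hL
        exact List.isChain_cons_cons.mpr ⟨hc, chain'_of_reduce_eq_self r⟩

variable {g : ℕ}

/-- The block of four letters representing `c_i^{±1}`. -/
def blk : Fin g × Bool → List ((Fin g × Bool) × Bool)
  | (i, true) => [((i,false),true),((i,true),true),((i,false),false),((i,true),false)]
  | (i, false) => [((i,true),true),((i,false),true),((i,true),false),((i,false),false)]

theorem blk_ne_nil (x : Fin g × Bool) : blk x ≠ [] := by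
  obtain ⟨i, _ | _⟩ := x <;> simp [blk]

theorem lift_mk_bind :
    ∀ L : List (Fin g × Bool),
      FreeGroup.lift
        (fun i : Fin g => ⁅FreeGroup.of (i, false), FreeGroup.of (i, true)⁆)
        (FreeGroup.mk L) = FreeGroup.mk (L.flatMap blk)
  | [] => _root_.map_one _
  | x :: L => by
      have : FreeGroup.mk (x :: L) = FreeGroup.mk [x] * FreeGroup.mk L := by
        rw [FreeGroup.mul_mk]; rfl
      rw [this, MonoidHom.map_mul, lift_mk_bind L]
      obtain ⟨i, s⟩ := x
      cases s
      · have h1 : FreeGroup.mk [((i, false) : Fin g × Bool)] = (FreeGroup.of i)⁻¹ := by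
          rw [show (FreeGroup.of i : FreeGroup (Fin g)) = FreeGroup.mk [(i, true)] from rfl,
            FreeGroup.inv_mk]
          rfl
        rw [h1, _root_.map_inv, FreeGroup.lift_apply_of]
        rw [show (FreeGroup.mk ((((i, false) : Fin g × Bool) :: L).flatMap blk)) =
          FreeGroup.mk (blk (i, false)) * FreeGroup.mk (L.flatMap blk) by
            rw [FreeGroup.mul_mk]; rfl]
        congr 1
      · rw [show FreeGroup.mk [((i, true) : Fin g × Bool)] = FreeGroup.of i from rfl,
          FreeGroup.lift_apply_of]
        rw [show (FreeGroup.mk ((((i, true) : Fin g × Bool) :: L).flatMap blk)) =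
          FreeGroup.mk (blk (i, true)) * FreeGroup.mk (L.flatMap blk) by
            rw [FreeGroup.mul_mk]; rfl]
        congr 1

theorem chain'_blk (x : Fin g × Bool) : List.Chain' Rr (blk x) := by
  obtain ⟨i, _ | _⟩ := x <;>
    simp [blk, List.Chain', List.isChain_cons_cons, Rr, Prod.ext_iff]

theorem chain'_bind :
    ∀ {L : List (Fin g × Bool)}, List.Chain' Rr L → List.Chain' Rr (L.flatMap blk)
  | [], _ => List.isChain_nil
  | x :: L, h => by
    rw [List.flatMap_cons, List.Chain', List.isChain_append]
    refine ⟨chain'_blk x, chain'_bind h.tail, ?_⟩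
    intro a ha b hb
    cases L with
    | nil => simp at hb
    | cons y rest =>
      rw [List.flatMap_cons, List.head?_append_of_ne_nil _ (blk_ne_nil y)] at hb
      have hxy : Rr x y := (List.isChain_cons_cons.mp h).1
      obtain ⟨i, si⟩ := x
      obtain ⟨j, sj⟩ := y
      cases si <;> cases sj <;>
        simp only [blk, List.getLast?, List.head?, Option.mem_def, Option.some.injEq] at ha hb <;>
        subst ha <;> subst hb <;>
        simp only [Rr, Prod.ext_iff, Bool.not_true, Bool.not_false, not_and] at hxy ⊢ <;>
        intro hab <;>
        simp_all

end CommFreeAux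

/-- In the free group `F_{2g} = ⟨a_1, b_1, …, a_g, b_g⟩` (here generated by
`(i, false) ↦ a_i` and `(i, true) ↦ b_i`), the commutators
`c_i = a_i b_i a_i⁻¹ b_i⁻¹` generate a free subgroup of rank `g`: the
homomorphism `F_g → F_{2g}` sending the `i`-th generator to `[a_i, b_i]`
is injective. -/
theorem commutators_freely_generate (g : ℕ) :
    Function.Injective
      (FreeGroup.lift
        (fun i : Fin g => ⁅FreeGroup.of (i, false), FreeGroup.of (i, true)⁆) :
        FreeGroup (Fin g) →* FreeGroup (Fin g × Bool)) := by
  rw [injective_iff_map_eq_one]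
  intro x hx
  have hred : FreeGroup.reduce x.toWord = x.toWord := FreeGroup.reduce_toWord x
  have hx' : FreeGroup.mk (x.toWord.flatMap CommFreeAux.blk) = 1 := by
    rw [← CommFreeAux.lift_mk_bind x.toWord, FreeGroup.mk_toWord]
    exact hx
  have hchain : List.Chain' CommFreeAux.Rr (x.toWord.flatMap CommFreeAux.blk) :=
    CommFreeAux.chain'_bind (CommFreeAux.chain'_of_reduce_eq_self hred)
  have hnil : x.toWord.flatMap CommFreeAux.blk = [] := by
    have := congrArg FreeGroup.toWord hx'
    rwa [FreeGroup.toWord_mk, FreeGroup.toWord_one,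
      CommFreeAux.reduce_eq_self_of_chain' hchain] at this
  have hL : x.toWord = [] := by
    cases h' : x.toWord with
    | nil => rfl
    | cons a l =>
      rw [h', List.flatMap_cons] at hnil
      exact absurd (List.append_eq_nil_iff.mp hnil).1 (CommFreeAux.blk_ne_nil a)
  rw [← FreeGroup.mk_toWord (x := x), hL]
  rfl
end
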